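/- In a right-justified alignment, for each string Sʲ, if position q−1 of the transformed string S̃ʲ is empty (a gap) then position q−1 lies inside a ps-region block and the last non-gap position before q in S̃ʲ is the last position of the preceding cs-region. Consequently, for two strings j₁, j₂ whose transformed forms both have position q−1 empty, the last non-gap positions before q coincide. -/
import Mathlib

lemma blk_mono (blk : ℕ → ℕ) (hstep : ∀ i, blk (i + 1) = blk i ∨ blk (i + 1) = blk i + 1) :
    ∀ a b, a ≤ b → blk a ≤ blk b := by
  intro a b hab
  induction b with
  | zero => have : a = 0 := by omega
            subst this; exact le_refl _
  | succ b ih =>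
    rcases Nat.lt_or_ge a (b+1) with h | h
    · have := ih (by omega)
      rcases hstep b with h' | h' <;> omega
    · have : a = b + 1 := by omega
      subst this; exact le_refl _

lemma blk_ivt (blk : ℕ → ℕ) (hstep : ∀ i, blk (i + 1) = blk i ∨ blk (i + 1) = blk i + 1) :
    ∀ a b, a ≤ b → ∀ v, blk a ≤ v → v ≤ blk b → ∃ r, a ≤ r ∧ r ≤ b ∧ blk r = v := by
  intro a b
  induction b with
  | zero => intro hab v h1 h2
            have : a = 0 := by omega
            subst this; exact ⟨0, le_refl _, le_refl _, by omega⟩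
  | succ b ih =>
    intro hab v h1 h2
    rcases Nat.lt_or_ge a (b+1) with h | h
    · rcases Nat.lt_or_ge (blk b) v with hv | hv
      · have : blk (b+1) = v := by rcases hstep b with h' | h' <;> omega
        exact ⟨b+1, by omega, le_refl _, this⟩
      · obtain ⟨r, hr1, hr2, hr3⟩ := ih (by omega) v h1 hv
        exact ⟨r, hr1, by omega, hr3⟩
    · have : a = b + 1 := by omega
      subst this; exact ⟨b+1, le_refl _, le_refl _, by omega⟩

/-- `p` is the last non-gap position before `q` in the transformed string `St`
(`St i = none` means alignment position `i` is a gap). -/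
def lastNonGap {α : Type*} (St : ℕ → Option α) (q p : ℕ) : Prop :=
  p < q ∧ St p ≠ none ∧ ∀ r, p < r → r < q → St r = none

/-- Right-justified alignment of `m` strings of total alignment length `n`:
`Stilde j i` is the character of string `j` at alignment position `i`
(`none` = gap).  `blk i` is the index of the block (region) containing
position `i`; blocks are consecutive intervals (`hblk0`, `hstep`), blocks
alternate between cs-regions (even index: every string has a character) and
ps-regions (odd index).  Right-justification: within a ps-region, gaps precede
characters (`hrj`).

Claim: if `S̃ʲ[q-1]` is a gap then `q-1` lies inside a ps-region, and the last
non-gap position before `q` in `S̃ʲ` is the last position of the preceding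
cs-region; consequently, for two strings whose transformed forms both have
position `q-1` empty, the last non-gap positions before `q` coincide. -/
theorem stmt7 {α : Type*} (m n : ℕ) (Stilde : Fin m → ℕ → Option α)
    (blk : ℕ → ℕ)
    (hblk0 : blk 0 = 0)
    (hstep : ∀ i, blk (i + 1) = blk i ∨ blk (i + 1) = blk i + 1)
    (hcs : ∀ (j : Fin m) i, i < n → Even (blk i) → Stilde j i ≠ none)
    (hrj : ∀ (j : Fin m) i i', i < n → i' < n → blk i = blk i' →
        ¬ Even (blk i) → i ≤ i' → Stilde j i ≠ none → Stilde j i' ≠ none) :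
    ∀ (j₁ j₂ : Fin m) (q p₁ p₂ : ℕ), 0 < q → q ≤ n →
      Stilde j₁ (q - 1) = none → Stilde j₂ (q - 1) = none →
      (¬ Even (blk (q - 1))) ∧
      (lastNonGap (Stilde j₁) q p₁ → lastNonGap (Stilde j₂) q p₂ →
        (Even (blk p₁) ∧ blk (q - 1) = blk p₁ + 1) ∧ p₁ = p₂) := by
  intro j₁ j₂ q p₁ p₂ hq hqn hg₁ hg₂
  have hq1n : q - 1 < n := by omega
  have hodd : ¬ Even (blk (q - 1)) := fun h => hcs j₁ (q-1) hq1n h hg₁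
  refine ⟨hodd, ?_⟩
  intro hL1 hL2
  have key : ∀ (j : Fin m) p, Stilde j (q-1) = none → lastNonGap (Stilde j) q p →
      Even (blk p) ∧ blk (q - 1) = blk p + 1 := by
    intro j p hg hL
    obtain ⟨hpq, hne, hgaps⟩ := hL
    have hpq1 : p < q - 1 := by
      rcases Nat.lt_or_ge p (q-1) with h | h
      · exact h
      · exfalso; have : p = q - 1 := by omega
        rw [this] at hne; exact hne hg
    have hple : blk p ≤ blk (q-1) := blk_mono blk hstep p (q-1) (by omega)
    have hep : Even (blk p) := by
      by_contra hoddp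
      rcases eq_or_lt_of_le hple with heq | hlt
      · exact hrj j p (q-1) (by omega) hq1n heq hoddp (by omega) hne hg
      · have hev : Even (blk p + 1) := Nat.even_add_one.mpr hoddp
        obtain ⟨r, hr1, hr2, hr3⟩ := blk_ivt blk hstep p (q-1) (by omega) (blk p + 1)
          (by omega) (by omega)
        have hrp : p < r := by
          rcases eq_or_lt_of_le hr1 with h | h
          · exfalso; rw [← h] at hr3; omega
          · exact h
        have hrq : r < q - 1 := by
          rcases eq_or_lt_of_le hr2 with h | h
          · exfalso; rw [h] at hr3; rw [hr3] at hodd; exact hodd hev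
          · exact h
        exact hcs j r (by omega) (hr3 ▸ hev) (hgaps r hrp (by omega))
    constructor
    · exact hep
    · have hne' : blk p ≠ blk (q-1) := by
        intro h; rw [h] at hep; exact hodd hep
      have : blk p + 1 ≤ blk (q-1) := by omega
      by_contra hne2
      have hlt2 : blk p + 2 ≤ blk (q-1) := by omega
      have hev : Even (blk p + 2) := by
        rcases hep with ⟨k, hk⟩; exact ⟨k+1, by omega⟩
      obtain ⟨r, hr1, hr2, hr3⟩ := blk_ivt blk hstep p (q-1) (by omega) (blk p + 2)
        (by omega) (by omega)
      have hrp : p < r := by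
        rcases eq_or_lt_of_le hr1 with h | h
        · exfalso; rw [← h] at hr3; omega
        · exact h
      have hrq : r < q - 1 := by
        rcases eq_or_lt_of_le hr2 with h | h
        · exfalso; rw [h] at hr3; rw [hr3] at hodd; exact hodd hev
        · exact h
      exact hcs j r (by omega) (hr3 ▸ hev) (hgaps r hrp (by omega))
  have k1 := key j₁ p₁ hg₁ hL1
  have k2 := key j₂ p₂ hg₂ hL2
  refine ⟨k1, ?_⟩
  obtain ⟨hpq1, hne1, hgaps1⟩ := hL1
  obtain ⟨hpq2, hne2, hgaps2⟩ := hL2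
  by_contra hne
  rcases Nat.lt_or_ge p₁ p₂ with h | h
  · exact hcs j₁ p₂ (by omega) k2.1 (hgaps1 p₂ h hpq2)
  · have h' : p₂ < p₁ := by omega
    exact hcs j₂ p₁ (by omega) k1.1 (hgaps2 p₁ h' hpq1)
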